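/- Let G be a finite simple graph on n vertices, and suppose G contains a matching M (a set of pairwise vertex-disjoint edges) such that each edge uv ∈ M is a pair of adjacent twins, i.e., N[u] = N[v]. Then r₂(G) = 2|M| + r₂(G - V(M)), where G - V(M) is the induced subgraph of G on the vertices not covered by M. -/

import Mathlib

open scoped Classical

/-- A list of bicliques `B 0, …, B (k-1)` (each given by a pair of disjoint
vertex subsets) is an *odd cover* of `G` if two distinct vertices are adjacent
in `G` exactly when they lie in opposite parts of an odd number of the bicliques. -/
def IsOddCover {V : Type*} [Fintype V] (G : SimpleGraph V) {k : ℕ}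
    (B : Fin k → Finset V × Finset V) : Prop :=
  (∀ i, Disjoint (B i).1 (B i).2) ∧
  ∀ u v : V, u ≠ v →
    (G.Adj u v ↔ Odd (Finset.univ.filter (fun i : Fin k =>
      (u ∈ (B i).1 ∧ v ∈ (B i).2) ∨ (u ∈ (B i).2 ∧ v ∈ (B i).1))).card)

/-- `b2 G` is the minimum cardinality of an odd cover of `G`. -/
noncomputable def b2 {V : Type*} [Fintype V] (G : SimpleGraph V) : ℕ :=
  sInf {k : ℕ | ∃ B : Fin k → Finset V × Finset V, IsOddCover G B}

/-- `r2 G` is the rank of the adjacency matrix of `G` over `𝔽₂`. -/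
noncomputable def r2 {V : Type*} [Fintype V] (G : SimpleGraph V) : ℕ :=
  (Matrix.of fun u v : V => if G.Adj u v then (1 : ZMod 2) else 0).rank

private lemma zmod2_add_eq_zero {a b : ZMod 2} (h : a + b = 0) : a = b := by
  revert a b; decide

/-- cardinality of the vertex set of a matching -/
private lemma matching_card {V : Type*} [Fintype V] {G : SimpleGraph V} (M : G.Subgraph)
    (hM : M.IsMatching) : M.verts.toFinset.card = 2 * M.edgeSet.ncard := by
  classical
  have h2 : M.edgeSet.ncard = M.coe.edgeSet.ncard := by
    rw [← M.image_coe_edgeSet_coe, Set.ncard_image_of_injective _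
      (Sym2.map.injective Subtype.coe_injective)]
  have key : Fintype.card ↑M.verts = 2 * M.coe.edgeFinset.card := by
    have hsum := M.coe.sum_degrees_eq_twice_card_edges
    rw [← hsum, ← Finset.card_univ, Finset.card_eq_sum_ones]
    refine Finset.sum_congr rfl fun v _ => ?_
    symm
    rw [SimpleGraph.Subgraph.coe_degree, SimpleGraph.Subgraph.degree_eq_one_iff_existsUnique_adj]
    exact hM v.2
  rw [SimpleGraph.edgeFinset_card] at key
  rw [← Nat.card_eq_fintype_card, ← Nat.card_eq_fintype_card] at key
  rw [Set.toFinset_card, ← Nat.card_eq_fintype_card, key, h2,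
    ← Nat.card_coe_set_eq]

theorem stmt14 {V : Type*} [Fintype V] (G : SimpleGraph V) (M : G.Subgraph)
    (hM : M.IsMatching)
    (htwin : ∀ u w : V, M.Adj u w →
      G.neighborSet u ∪ {u} = G.neighborSet w ∪ {w}) :
    r2 G = 2 * M.edgeSet.ncard + r2 (G.induce M.vertsᶜ) := by
  set F := ZMod 2
  set A : Matrix V V F := Matrix.of fun u v : V => if G.Adj u v then (1 : F) else 0 with hA
  set Q := ↥(M.vertsᶜ)
  set B : Matrix Q Q F :=
    Matrix.of fun u v : Q => if (G.induce M.vertsᶜ).Adj u v then (1 : F) else 0 with hB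
  -- the partner function
  have hσex : ∀ v ∈ M.verts, ∃! w, M.Adj v w := fun v hv => hM hv
  let σ : V → V := fun v => if h : v ∈ M.verts then (hσex v h).choose else v
  have hσadj : ∀ v ∈ M.verts, M.Adj v (σ v) := by
    intro v hv
    simp only [σ, dif_pos hv]
    exact (hσex v hv).choose_spec.1
  have hσuniq : ∀ {v w}, M.Adj v w → σ v = w := by
    intro v w hvw
    have hv : v ∈ M.verts := M.edge_vert hvw
    simp only [σ, dif_pos hv]
    exact ((hσex v hv).choose_spec.2 w hvw).symm
  have hσmem : ∀ v ∈ M.verts, σ v ∈ M.verts := fun v hv =>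
    M.edge_vert (hσadj v hv).symm
  have hσσ : ∀ v ∈ M.verts, σ (σ v) = v := fun v hv =>
    hσuniq (hσadj v hv).symm
  have hσne : ∀ v ∈ M.verts, σ v ≠ v := fun v hv =>
    (M.adj_sub (hσadj v hv)).ne'
  -- the key twin relation for rows of A
  have h11 : (1 : F) + 1 = 0 := by decide
  have hself : ∀ a : F, a + a = 0 := by decide
  have hAdef : ∀ u v : V, A u v = if G.Adj u v then 1 else 0 := fun _ _ => rfl
  have hArow : ∀ u w, M.Adj u w → ∀ y : V,
      A u y + A w y = (if y = u then 1 else 0) + (if y = w then 1 else 0) := by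
    intro u w huw y
    have hG := M.adj_sub huw
    have hne : u ≠ w := hG.ne
    have hmem : (y = u ∨ G.Adj u y) ↔ (y = w ∨ G.Adj w y) := by
      have := Set.ext_iff.mp (htwin u w huw) y
      simpa [SimpleGraph.mem_neighborSet, G.adj_comm] using this
    by_cases hyu : y = u
    · subst hyu
      rw [hAdef, hAdef, if_neg (G.irrefl), if_pos hG.symm, if_pos rfl, if_neg hne]
      decide
    · by_cases hyw : y = w
      · subst hyw
        rw [hAdef, hAdef, if_pos hG, if_neg (G.irrefl), if_neg (Ne.symm hne), if_pos rfl]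
        decide
      · have hiff : G.Adj u y ↔ G.Adj w y := by
          constructor
          · intro h
            rcases hmem.mp (Or.inr h) with h' | h'
            · exact absurd h' hyw
            · exact h'
          · intro h
            rcases hmem.mpr (Or.inr h) with h' | h'
            · exact absurd h' hyu
            · exact h'
        rw [if_neg hyu, if_neg hyw]
        by_cases h : G.Adj u y
        · rw [hAdef, hAdef, if_pos h, if_pos (hiff.mp h)]
          exact h11
        · rw [hAdef, hAdef, if_neg h, if_neg (fun hh => h (hiff.mpr hh))]
  have hAsymm : ∀ u v : V, A u v = A v u := by
    intro u v; simp only [A, Matrix.of_apply, G.adj_comm]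
  -- sums over matched vertices of a pair-constant function
  have hL : ∀ (x : V → F), (∀ v ∈ M.verts, x (σ v) = x v) → ∀ w : V,
      ∑ z ∈ M.verts.toFinset, A w z * x z = if w ∈ M.verts then x w else 0 := by
    intro x hx w
    have key : ∑ z ∈ M.verts.toFinset,
        ((A w z + if w = z then 1 else 0) * x z) = 0 := by
      refine Finset.sum_involution (fun a _ => σ a) ?_ ?_ ?_ ?_
      · intro a ha
        have haM : a ∈ M.verts := Set.mem_toFinset.mp ha
        have h1 : A w a + A w (σ a) =
            (if w = a then 1 else 0) + (if w = σ a then 1 else 0) := by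
          rw [hAsymm w a, hAsymm w (σ a)]
          exact hArow a (σ a) (hσadj a haM) w
        have h2 := hx a haM
        show (A w a + if w = a then 1 else 0) * x a
          + (A w (σ a) + if w = σ a then 1 else 0) * x (σ a) = 0
        rw [h2, ← add_mul, show (A w a + if w = a then 1 else 0)
            + (A w (σ a) + if w = σ a then 1 else 0)
            = (A w a + A w (σ a)) + ((if w = a then 1 else 0)
              + (if w = σ a then 1 else 0)) by ring, h1, hself, zero_mul]
      · intro a ha _
        exact hσne a (Set.mem_toFinset.mp ha)
      · intro a ha
        exact Set.mem_toFinset.mpr (hσmem a (Set.mem_toFinset.mp ha))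
      · intro a ha
        exact hσσ a (Set.mem_toFinset.mp ha)
    have expand : ∑ z ∈ M.verts.toFinset, ((A w z + if w = z then 1 else 0) * x z)
        = ∑ z ∈ M.verts.toFinset, A w z * x z
          + ∑ z ∈ M.verts.toFinset, (if w = z then 1 else 0) * x z := by
      rw [← Finset.sum_add_distrib]
      exact Finset.sum_congr rfl fun z _ => by ring
    have hdelta : ∑ z ∈ M.verts.toFinset, (if w = z then 1 else 0) * x z
        = if w ∈ M.verts then x w else 0 := by
      simp only [ite_mul, one_mul, zero_mul]
      rw [Finset.sum_ite_eq]
      simp [Set.mem_toFinset]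
    rw [expand, hdelta] at key
    exact zmod2_add_eq_zero key
  -- kernel elements are constant on pairs
  have hker_const : ∀ x : V → F, A.mulVec x = 0 → ∀ v ∈ M.verts, x (σ v) = x v := by
    intro x hx v hv
    have h1 : A.mulVec x v = 0 := congrFun hx v
    have h2 : A.mulVec x (σ v) = 0 := congrFun hx (σ v)
    have h3 : ∑ z : V, (A v z + A (σ v) z) * x z = 0 := by
      have : ∑ z : V, (A v z + A (σ v) z) * x z
          = A.mulVec x v + A.mulVec x (σ v) := by
        simp only [Matrix.mulVec, dotProduct]
        rw [← Finset.sum_add_distrib]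
        exact Finset.sum_congr rfl fun z _ => by ring
      rw [this, h1, h2, add_zero]
    have h4 : ∑ z : V, ((if z = v then (1:F) else 0) + if z = σ v then 1 else 0) * x z
        = x v + x (σ v) := by
      have : ∀ z : V, ((if z = v then (1:F) else 0) + if z = σ v then 1 else 0) * x z
          = (if z = v then x v else 0) + (if z = σ v then x (σ v) else 0) := by
        intro z
        have hne := hσne v hv
        by_cases h1 : z = v
        · by_cases h2 : z = σ v
          · exact absurd (h1.symm.trans h2) (Ne.symm hne)
          · simp [h1, h2, Ne.symm hne]
        · by_cases h2 : z = σ v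
          · simp [h1, h2, hne]
          · simp [h1, h2]
      rw [Finset.sum_congr rfl fun z _ => this z, Finset.sum_add_distrib,
        Finset.sum_ite_eq', Finset.sum_ite_eq']
      simp
    rw [Finset.sum_congr rfl (fun z _ => by rw [hArow v (σ v) (hσadj v hv) z]), h4] at h3
    exact (zmod2_add_eq_zero h3).symm
  -- relating sums over Q and over the complement finset
  have hQsum : ∀ f : V → F, ∑ z : Q, f ↑z = ∑ z ∈ (M.vertsᶜ).toFinset, f z := by
    intro f
    exact (Finset.sum_subtype (M.vertsᶜ).toFinset (fun x => Set.mem_toFinset) f).symm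
  have hsplit : ∀ f : V → F, ∑ z : V, f z
      = ∑ z ∈ M.verts.toFinset, f z + ∑ z ∈ (M.vertsᶜ).toFinset, f z := by
    intro f
    rw [Set.toFinset_compl]
    exact (Finset.sum_add_sum_compl M.verts.toFinset f).symm
  have hBA : ∀ q z : Q, B q z = A ↑q ↑z := fun q z => rfl
  -- restriction sends the kernel of A to the kernel of B
  have hmapsto : ∀ x : V → F, A.mulVec x = 0 → B.mulVec (fun q : Q => x ↑q) = 0 := by
    intro x hx
    funext q
    have h0 : (0 : F) = ∑ z : V, A ↑q z * x z := by
      have := congrFun hx ↑q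
      simp only [Matrix.mulVec, dotProduct, Pi.zero_apply] at this
      exact this.symm
    have hPzero : ∑ z ∈ M.verts.toFinset, A ↑q z * x z = 0 := by
      rw [hL x (hker_const x hx) ↑q, if_neg q.2]
    have hcalc : B.mulVec (fun q : Q => x ↑q) q
        = ∑ z ∈ (M.vertsᶜ).toFinset, A ↑q z * x z := by
      simp only [Matrix.mulVec, dotProduct]
      rw [Finset.sum_congr rfl fun z _ => by rw [hBA q z]]
      exact hQsum (fun w => A ↑q w * x w)
    rw [hcalc, Pi.zero_apply]
    have := hsplit (fun z => A ↑q z * x z)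
    rw [← h0, hPzero, zero_add] at this
    exact this.symm
  -- the linear map from ker A to ker B
  let ρ : ((V → F) →ₗ[F] (Q → F)) := LinearMap.funLeft F F (Subtype.val)
  have hρ : ∀ (x : V → F) (q : Q), ρ x q = x ↑q := fun x q => rfl
  let φ : LinearMap.ker A.mulVecLin →ₗ[F] LinearMap.ker B.mulVecLin :=
    LinearMap.codRestrict _ (ρ.domRestrict (LinearMap.ker A.mulVecLin))
      (by
        rintro ⟨x, hx⟩
        rw [LinearMap.mem_ker, Matrix.mulVecLin_apply] at hx ⊢
        exact hmapsto x hx)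
  -- injectivity
  have hinj : Function.Injective φ := by
    rw [injective_iff_map_eq_zero]
    rintro ⟨x, hx⟩ h
    rw [LinearMap.mem_ker, Matrix.mulVecLin_apply] at hx
    have hQ0 : ∀ q : Q, x ↑q = 0 := by
      intro q
      have := congrFun (Subtype.ext_iff.mp h) q
      exact this
    ext v
    show x v = 0
    by_cases hv : v ∈ M.verts
    · have h0 : (0 : F) = ∑ z : V, A v z * x z := by
        have := congrFun hx v
        simp only [Matrix.mulVec, dotProduct, Pi.zero_apply] at this
        exact this.symm
      have hP : ∑ z ∈ M.verts.toFinset, A v z * x z = x v := by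
        rw [hL x (hker_const x hx) v, if_pos hv]
      have hC : ∑ z ∈ (M.vertsᶜ).toFinset, A v z * x z = 0 := by
        refine Finset.sum_eq_zero fun z hz => ?_
        rw [hQ0 ⟨z, Set.mem_toFinset.mp hz⟩, mul_zero]
      have := hsplit (fun z => A v z * x z)
      rw [← h0, hP, hC, add_zero] at this
      exact this.symm
    · exact hQ0 ⟨v, hv⟩
  -- surjectivity
  have hsurj : Function.Surjective φ := by
    rintro ⟨y, hy⟩
    rw [LinearMap.mem_ker, Matrix.mulVecLin_apply] at hy
    set y' : V → F := fun v => if h : v ∈ M.vertsᶜ then y ⟨v, h⟩ else 0 with hy'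
    set x : V → F := fun v =>
      if v ∈ M.verts then ∑ z ∈ (M.vertsᶜ).toFinset, A v z * y' z else y' v with hxdef
    have hApair : ∀ u w, M.Adj u w → ∀ z ∈ (M.vertsᶜ).toFinset, A u z = A w z := by
      intro u w huw z hz
      have hzc : z ∈ M.vertsᶜ := Set.mem_toFinset.mp hz
      have h1 := hArow u w huw z
      have h2 : z ≠ u := fun h => hzc (h ▸ M.edge_vert huw)
      have h3 : z ≠ w := fun h => hzc (h ▸ M.edge_vert huw.symm)
      rw [if_neg h2, if_neg h3, add_zero] at h1
      exact zmod2_add_eq_zero h1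
    have hconst : ∀ v ∈ M.verts, x (σ v) = x v := by
      intro v hv
      have hσv := hσmem v hv
      simp only [hxdef, if_pos hv, if_pos hσv]
      refine Finset.sum_congr rfl fun z hz => ?_
      rw [hApair v (σ v) (hσadj v hv) z hz]
    have hxQ : ∀ z ∈ (M.vertsᶜ).toFinset, x z = y' z := by
      intro z hz
      have : z ∉ M.verts := Set.mem_toFinset.mp hz
      simp only [hxdef, if_neg this]
    have hxker : A.mulVec x = 0 := by
      funext w
      simp only [Pi.zero_apply]
      have hexp : A.mulVec x w = ∑ z : V, A w z * x z := by
        simp [Matrix.mulVec, dotProduct]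
      rw [hexp, hsplit (fun z => A w z * x z), hL x hconst w]
      have hCC : ∑ z ∈ (M.vertsᶜ).toFinset, A w z * x z
          = ∑ z ∈ (M.vertsᶜ).toFinset, A w z * y' z := by
        refine Finset.sum_congr rfl fun z hz => by rw [hxQ z hz]
      rw [hCC]
      by_cases hw : w ∈ M.verts
      · rw [if_pos hw]
        have : x w = ∑ z ∈ (M.vertsᶜ).toFinset, A w z * y' z := by
          simp only [hxdef, if_pos hw]
        rw [this]
        exact hself _
      · rw [if_neg hw, zero_add]
        have h0 : B.mulVec y ⟨w, hw⟩ = 0 := congrFun hy ⟨w, hw⟩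
        have hcalc : B.mulVec y ⟨w, hw⟩ = ∑ z ∈ (M.vertsᶜ).toFinset, A w z * y' z := by
          simp only [Matrix.mulVec, dotProduct]
          rw [show ∑ z : Q, B ⟨w, hw⟩ z * y z = ∑ z : Q, A w ↑z * y' ↑z from
            Finset.sum_congr rfl fun z _ => by
              rw [hBA ⟨w, hw⟩ z]
              congr 1
              simp only [hy', dif_pos z.2, Subtype.coe_eta]]
          exact hQsum (fun v => A w v * y' v)
        rw [← hcalc, h0]
    refine ⟨⟨x, ?_⟩, ?_⟩
    · rw [LinearMap.mem_ker, Matrix.mulVecLin_apply]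
      exact hxker
    · apply Subtype.ext
      funext q
      show x ↑q = y q
      have : x ↑q = y' ↑q := hxQ ↑q (Set.mem_toFinset.mpr q.2)
      rw [this]
      simp only [hy', dif_pos q.2, Subtype.coe_eta]
  -- finrank equality of kernels
  have hkereq : Module.finrank F (LinearMap.ker A.mulVecLin)
      = Module.finrank F (LinearMap.ker B.mulVecLin) :=
    (LinearEquiv.ofBijective φ ⟨hinj, hsurj⟩).finrank_eq
  -- rank-nullity
  have hrnA : A.rank + Module.finrank F (LinearMap.ker A.mulVecLin) = Fintype.card V := by
    rw [Matrix.rank, LinearMap.finrank_range_add_finrank_ker,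
      Module.finrank_fintype_fun_eq_card]
  have hrnB : B.rank + Module.finrank F (LinearMap.ker B.mulVecLin) = Fintype.card Q := by
    rw [Matrix.rank, LinearMap.finrank_range_add_finrank_ker,
      Module.finrank_fintype_fun_eq_card]
  -- cardinalities
  have hcards : Fintype.card V = M.verts.toFinset.card + Fintype.card Q := by
    rw [← Set.toFinset_card (M.vertsᶜ), Set.toFinset_compl]
    exact (Finset.card_add_card_compl M.verts.toFinset).symm
  have hmc := matching_card M hM
  have hr2G : r2 G = A.rank := rfl
  have hr2B : r2 (G.induce M.vertsᶜ) = B.rank := rfl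
  omega
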